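/- arXiv:1805.04568 — 4 statements merged into one kernel-verified Lean document; each statement's English description precedes it below -/
import Mathlib

section
/- Let R be a commutative Noetherian local ring and M a finitely generated R-module with M* = Hom_R(M,R) nonzero. If Ext^1_R(Tr M, M*) = 0 and Ext^2_R(Tr M, M*) = 0, then M is free. -/
open CategoryTheory IsLocalRing

open Limits


noncomputable section KeyRes

variable {R : Type} [CommRing R] {P₀ P₁ T : ModuleCat.{0} R}
  [Projective P₀] [Projective P₁]

/-- The complex `⋯ → syzygies d → P₁ → P₀`. -/
noncomputable def kCpx (d : P₁ ⟶ P₀) : ChainComplex (ModuleCat.{0} R) ℕ :=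
  ChainComplex.mk P₀ P₁ (Projective.syzygies d) d (Projective.d d) (by
    have h : Projective.d d ≫ d = 0 := (Category.assoc (Projective.π (kernel d)) (kernel.ι d) d).trans (by rw [kernel.condition, comp_zero]; rfl)
    exact h)
    (fun S => ⟨Projective.syzygies S.f, Projective.d S.f, by
      have h : Projective.d S.f ≫ S.f = 0 := (Category.assoc (Projective.π (kernel S.f)) (kernel.ι S.f) S.f).trans (by rw [kernel.condition, comp_zero]; rfl)
      exact h⟩)

lemma kCpx_d_1_0 (d : P₁ ⟶ P₀) : (kCpx d).d 1 0 = d := by exact ChainComplex.mk_d_1_0 _ _ _ _ _ _ _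

lemma kCpx_d_2_1 (d : P₁ ⟶ P₀) : (kCpx d).d 2 1 = Projective.d d := by exact ChainComplex.mk_d_2_1 _ _ _ _ _ _ _

lemma sc'_of_eq {V : Type*} [Category V] [HasZeroMorphisms V] (X : ℕ → V)
    (dd : ∀ n, X (n + 1) ⟶ X n) (sq : ∀ n, dd (n + 1) ≫ dd n = 0) (j : ℕ) :
    (ChainComplex.of X dd sq).sc' (j + 2) (j + 1) j = ShortComplex.mk (dd (j + 1)) (dd j) (sq j) := by
  simp [HomologicalComplex.sc', HomologicalComplex.shortComplexFunctor', ChainComplex.of_d]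
  exact ChainComplex.of_d X dd (j + 1)

lemma kCpx_exactAt_succ (d : P₁ ⟶ P₀) (n : ℕ) : (kCpx d).ExactAt (n + 1) := by
  rw [HomologicalComplex.exactAt_iff' _ (n + 1 + 1) (n + 1) n (by simp) (by simp)]
  dsimp [kCpx, HomologicalComplex.sc', HomologicalComplex.shortComplexFunctor',
    ChainComplex.mk]
  match n with
  | 0 => apply exact_d_f
  | n + 1 =>
    refine (?_ : ((kCpx d).sc' (n + 1 + 1 + 1) (n + 1 + 1) (n + 1)).Exact)
    refine (congrArg ShortComplex.Exact (sc'_of_eq _ _ (by intro k; exact (ChainComplex.mkAux _ _ _ _ _ _ _ k).zero) (n + 1))).mpr ?_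
    apply exact_d_f

instance kCpx_projective (d : P₁ ⟶ P₀) (n : ℕ) : Projective ((kCpx d).X n) := by
  obtain (_ | _ | _ | n) := n
  · exact inferInstanceAs (Projective P₀)
  · exact inferInstanceAs (Projective P₁)
  · apply Projective.projective_over
  · apply Projective.projective_over

/-- The projective resolution of `T` built from `d` and `φ`. -/
noncomputable def kRes (d : P₁ ⟶ P₀) (φ : P₀ ⟶ T) (hφ : Function.Surjective φ)
    (hker : LinearMap.ker φ.hom = LinearMap.range d.hom) : ProjectiveResolution T where
  complex := kCpx d
  π := (ChainComplex.toSingle₀Equiv _ _).symm ⟨φ, by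
    rw [kCpx_d_1_0]
    ext x
    have : d x ∈ LinearMap.ker φ.hom := hker ▸ LinearMap.mem_range_self d.hom x
    exact this⟩
  quasiIso := ⟨fun n => by
    cases n with
    | zero =>
      have wd : d ≫ φ = 0 := by
        ext x
        have : d x ∈ LinearMap.ker φ.hom := hker ▸ LinearMap.mem_range_self d.hom x
        exact this
      rw [ChainComplex.quasiIsoAt₀_iff, ShortComplex.quasiIso_iff_of_zeros']
      · refine (ShortComplex.exact_and_epi_g_iff_of_iso
          (S₂ := ShortComplex.mk d φ wd) ?_).2 ⟨?_, ?_⟩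
        · exact ShortComplex.isoMk (Iso.refl _) (Iso.refl _) (Iso.refl _)
            (by simp [kCpx_d_1_0]; exact (Category.id_comp d).trans (Category.comp_id d).symm)
            (by simp [ChainComplex.toSingle₀Equiv_symm_apply_f_zero]; exact (Category.id_comp φ).trans (Category.comp_id φ).symm)
        · rw [ShortComplex.moduleCat_exact_iff_range_eq_ker]
          exact hker.symm
        · exact (ModuleCat.epi_iff_surjective φ).2 hφ
      all_goals rfl
    | succ n =>
      rw [quasiIsoAt_iff_exactAt']
      · exact kCpx_exactAt_succ d n
      · apply ChainComplex.exactAt_succ_single_obj⟩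

end KeyRes

section Key

variable {R : Type} [CommRing R] {P₀ P₁ T Y : ModuleCat.{0} R}
  [Projective P₀] [Projective P₁]

lemma mcomp_apply {A B C : ModuleCat.{0} R} (f : A ⟶ B) (g : B ⟶ C) (x : A) :
    (f ≫ g) x = g (f x) := rfl

lemma projd_mem_ker (d : P₁ ⟶ P₀) (z : (Projective.syzygies d : ModuleCat.{0} R)) :
    Projective.d d z ∈ LinearMap.ker d.hom := by
  have h : Projective.d d ≫ d = 0 := by exact (Category.assoc (Projective.π (kernel d)) (kernel.ι d) d).trans (by rw [kernel.condition, comp_zero]; rfl)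
  have := mcomp_apply (Projective.d d) d z
  rw [h] at this
  exact this.symm

lemma projd_surj (d : P₁ ⟶ P₀) : ∀ x ∈ LinearMap.ker d.hom, ∃ z, Projective.d d z = x := by
  intro x hx
  obtain ⟨k, hk⟩ : ∃ k, kernel.ι d k = x := by
    refine ⟨(ModuleCat.kernelIsoKer d).inv ⟨x, hx⟩, ?_⟩
    have := mcomp_apply (ModuleCat.kernelIsoKer d).inv (kernel.ι d) ⟨x, hx⟩
    rw [ModuleCat.kernelIsoKer_inv_kernel_ι] at this
    exact this.symm
  obtain ⟨z, hz⟩ := (ModuleCat.epi_iff_surjective (Projective.π (kernel d))).1 inferInstance k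
  refine ⟨z, ?_⟩
  show (kernel.ι d) ((Projective.π (kernel d)) z) = x
  rw [hz, hk]

theorem key (d : P₁ ⟶ P₀) (φ : P₀ ⟶ T) (hφ : Function.Surjective φ)
    (hker : LinearMap.ker φ.hom = LinearMap.range d.hom)
    (h1 : Subsingleton (((_root_.Ext R (ModuleCat.{0} R) 1).obj (Opposite.op T)).obj Y))
    (h2 : Subsingleton (((_root_.Ext R (ModuleCat.{0} R) 2).obj (Opposite.op T)).obj Y)) :
    (∀ χ : P₁ ⟶ Y, (∀ x ∈ LinearMap.ker d.hom, χ x = 0) → ∃ ξ : P₀ ⟶ Y, d ≫ ξ = χ) ∧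
    (∀ ψ : ↥(LinearMap.ker d.hom) →ₗ[R] Y, ∃ χ : P₁ ⟶ Y,
      ∀ x (hx : x ∈ LinearMap.ker d.hom), χ x = ψ ⟨x, hx⟩) := by
  set W := (kCpx d).linearYonedaObj R Y with hW
  have hexact : ∀ n, Subsingleton (((_root_.Ext R (ModuleCat.{0} R) n).obj
      (Opposite.op T)).obj Y) → W.ExactAt n := by
    intro n h
    rw [HomologicalComplex.exactAt_iff_isZero_homology]
    exact IsZero.of_iso (@ModuleCat.isZero_of_subsingleton _ _ _ h)
      ((kRes d φ hφ hker).isoExt n Y).symm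
  have hd : ∀ (i j : ℕ) (f : (kCpx d).X i ⟶ Y), W.d i j f = (kCpx d).d j i ≫ f := by
    intro i j f
    show ((kCpx d).linearYonedaObj R Y).d i j f = (kCpx d).d j i ≫ f
    rw [ChainComplex.linearYonedaObj_d]
    rfl
  have h10 : (kCpx d).d 1 0 = d := kCpx_d_1_0 d
  have h21 : (kCpx d).d 2 1 = Projective.d d := kCpx_d_2_1 d
  have e1 := hexact 1 h1
  rw [HomologicalComplex.exactAt_iff' W 0 1 2 (by simp) (by simp),
    ShortComplex.moduleCat_exact_iff] at e1
  have e2 := hexact 2 h2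
  rw [HomologicalComplex.exactAt_iff' W 1 2 3 (by simp) (by simp),
    ShortComplex.moduleCat_exact_iff] at e2
  have E1 : ∀ (χ : P₁ ⟶ Y), W.d 1 2 χ = 0 → ∃ ξ : P₀ ⟶ Y, (kCpx d).d 1 0 ≫ ξ = χ := by
    intro χ hχ
    obtain ⟨ξ, hξ⟩ := e1 χ hχ
    exact ⟨ξ, hξ⟩
  have E2 : ∀ (σ : (kCpx d).X 2 ⟶ Y), W.d 2 3 σ = 0 →
      ∃ χ : P₁ ⟶ Y, (kCpx d).d 2 1 ≫ χ = σ := by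
    intro σ hσ
    obtain ⟨χ, hχ⟩ := e2 σ hσ
    exact ⟨χ, hχ⟩
  constructor
  · intro χ hχ
    have hg : W.d 1 2 χ = 0 := by
      rw [hd 1 2 χ, h21]
      refine ModuleCat.hom_ext (LinearMap.ext fun z => ?_)
      show χ (Projective.d d z) = 0
      exact hχ _ (projd_mem_ker d z)
    obtain ⟨ξ, hξ⟩ := E1 χ hg
    rw [h10] at hξ
    exact ⟨ξ, hξ⟩
  · intro ψ
    set δ : (Projective.syzygies d : ModuleCat.{0} R) →ₗ[R] ↥(LinearMap.ker d.hom) :=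
      LinearMap.codRestrict (LinearMap.ker d.hom) (Projective.d d).hom (projd_mem_ker d) with hδ
    have hσg : W.d 2 3 (ModuleCat.ofHom (ψ.comp δ) : Projective.syzygies d ⟶ Y) = 0 := by
      refine (hd 2 3 _).trans ?_
      refine ModuleCat.hom_ext (LinearMap.ext fun z => ?_)
      show ψ (δ ((kCpx d).d 3 2 z)) = 0
      have hz0 : δ ((kCpx d).d 3 2 z) = 0 := by
        apply Subtype.ext
        show (Projective.d d) ((kCpx d).d 3 2 z) = 0
        rw [← h21]
        have hdd := (kCpx d).d_comp_d 3 2 1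
        calc ((kCpx d).d 2 1) (((kCpx d).d 3 2) z)
            = ((kCpx d).d 3 2 ≫ (kCpx d).d 2 1) z := rfl
        _ = 0 := by rw [hdd]; rfl
      rw [hz0, map_zero]
    obtain ⟨χ, hχ⟩ := E2 (ModuleCat.ofHom (ψ.comp δ) : Projective.syzygies d ⟶ Y) hσg
    rw [h21] at hχ
    refine ⟨χ, fun x hx => ?_⟩
    obtain ⟨z, hz⟩ := projd_surj d x hx
    have hpt : χ ((Projective.d d) z) = ψ (δ z) := LinearMap.congr_fun (congrArg ModuleCat.Hom.hom hχ) z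
    rw [hz] at hpt
    rw [hpt]
    congr 1
    exact Subtype.ext hz

end Key


/-- Let `R` be a commutative Noetherian local ring and `M` a finitely
generated module with `M* = Hom_R(M,R)` nonzero.  Given a minimal free presentation
`F₁ → F₀ → M → 0`, the Auslander transpose `Tr M` is the cokernel of the dual map
`F₀* → F₁*`.  If `Ext¹_R(Tr M, M*) = 0` and `Ext²_R(Tr M, M*) = 0`, then `M` is free. -/
theorem stmt_0 (R : Type) [CommRing R] [IsNoetherianRing R] [IsLocalRing R]
    (M : Type) [AddCommGroup M] [Module R M] [Module.Finite R M]
    (hM : Nontrivial (Module.Dual R M))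
    (F₀ F₁ : Type) [AddCommGroup F₀] [Module R F₀] [Module.Free R F₀] [Module.Finite R F₀]
    [AddCommGroup F₁] [Module R F₁] [Module.Free R F₁] [Module.Finite R F₁]
    (p : F₁ →ₗ[R] F₀) (q : F₀ →ₗ[R] M)
    (hq : Function.Surjective q) (hpq : Function.Exact p q)
    -- minimality of the presentation
    (hmin₀ : LinearMap.ker q ≤ (maximalIdeal R) • (⊤ : Submodule R F₀))
    (hmin₁ : LinearMap.ker p ≤ (maximalIdeal R) • (⊤ : Submodule R F₁))
    -- the transpose of `M`
    (Tr : Type) [AddCommGroup Tr] [Module R Tr]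
    (e : Tr ≃ₗ[R] (Module.Dual R F₁ ⧸ LinearMap.range (p.dualMap)))
    (h1 : Subsingleton (((_root_.Ext R (ModuleCat.{0} R) 1).obj
        (Opposite.op (ModuleCat.of R Tr))).obj (ModuleCat.of R (Module.Dual R M))))
    (h2 : Subsingleton (((_root_.Ext R (ModuleCat.{0} R) 2).obj
        (Opposite.op (ModuleCat.of R Tr))).obj (ModuleCat.of R (Module.Dual R M)))) :
    Module.Free R M := by
  classical
  haveI := hM
  -- basic exactness facts
  have hqp : ∀ z : F₁, q (p z) = 0 := fun z => hpq.apply_apply_eq_zero z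
  have hj : Function.Injective q.dualMap := LinearMap.dualMap_injective_of_surjective hq
  have hexd : LinearMap.ker p.dualMap = LinearMap.range q.dualMap := by
    ext g
    constructor
    · intro hg
      have hle : LinearMap.ker q ≤ LinearMap.ker g := by
        rw [LinearMap.exact_iff.mp hpq]
        rintro _ ⟨z, rfl⟩
        have h0 : p.dualMap g = 0 := hg
        calc g (p z) = (p.dualMap g) z := rfl
        _ = 0 := by rw [h0]; rfl
      refine ⟨(LinearMap.ker q).liftQ g hle ∘ₗ (q.quotKerEquivOfSurjective hq).symm.toLinearMap, ?_⟩
      apply LinearMap.ext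
      intro x
      have hmk : (q.quotKerEquivOfSurjective hq).symm (q x) = Submodule.Quotient.mk x := by
        apply (q.quotKerEquivOfSurjective hq).injective
        rw [LinearEquiv.apply_symm_apply]
        rfl
      show ((LinearMap.ker q).liftQ g hle) ((q.quotKerEquivOfSurjective hq).symm (q x)) = g x
      rw [hmk]
      rfl
    · rintro ⟨f, rfl⟩
      show p.dualMap (q.dualMap f) = 0
      apply LinearMap.ext
      intro z
      show f (q (p z)) = 0
      rw [hqp z, map_zero]
  -- applying the Ext computation
  haveI iP1 : CategoryTheory.Projective (ModuleCat.of R (Module.Dual R F₀)) :=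
    (IsProjective.iff_projective _).1 inferInstance
  haveI iP0 : CategoryTheory.Projective (ModuleCat.of R (Module.Dual R F₁)) :=
    (IsProjective.iff_projective _).1 inferInstance
  have hφ : Function.Surjective
      (ModuleCat.ofHom (e.symm.toLinearMap ∘ₗ (LinearMap.range p.dualMap).mkQ) :
        ModuleCat.of R (Module.Dual R F₁) ⟶ ModuleCat.of R Tr) :=
    e.symm.surjective.comp (Submodule.mkQ_surjective _)
  have hker : LinearMap.ker (ModuleCat.ofHom
        (e.symm.toLinearMap ∘ₗ (LinearMap.range p.dualMap).mkQ) :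
        ModuleCat.of R (Module.Dual R F₁) ⟶ ModuleCat.of R Tr).hom
      = LinearMap.range (ModuleCat.ofHom p.dualMap :
        ModuleCat.of R (Module.Dual R F₀) ⟶ ModuleCat.of R (Module.Dual R F₁)).hom := by
    show LinearMap.ker (e.symm.toLinearMap ∘ₗ (LinearMap.range p.dualMap).mkQ)
      = LinearMap.range p.dualMap
    ext x
    simp [LinearMap.mem_ker, LinearEquiv.map_eq_zero_iff, Submodule.Quotient.mk_eq_zero]
  obtain ⟨fact1, fact2⟩ := key (ModuleCat.ofHom p.dualMap)
    (ModuleCat.ofHom (e.symm.toLinearMap ∘ₗ (LinearMap.range p.dualMap).mkQ)) hφ hker h1 h2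
  -- the retraction r : F₀* → M* with r ∘ j = id
  let jequiv : Module.Dual R M ≃ₗ[R] ↥(LinearMap.ker p.dualMap) :=
    (LinearEquiv.ofInjective q.dualMap hj).trans (LinearEquiv.ofEq _ _ hexd.symm)
  obtain ⟨r₀, hr⟩ := fact2 jequiv.symm.toLinearMap
  let r : Module.Dual R F₀ →ₗ[R] Module.Dual R M := r₀.hom
  have hr : ∀ x (hx : x ∈ LinearMap.ker p.dualMap), r x = jequiv.symm.toLinearMap ⟨x, hx⟩ := hr
  have hrj : ∀ f : Module.Dual R M, r (q.dualMap f) = f := by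
    intro f
    have hm : q.dualMap f ∈ LinearMap.ker p.dualMap :=
      hexd.symm ▸ LinearMap.mem_range_self q.dualMap f
    rw [hr (q.dualMap f) hm]
    have hsub : (⟨q.dualMap f, hm⟩ : ↥(LinearMap.ker p.dualMap)) = jequiv f := Subtype.ext rfl
    show jequiv.symm ⟨q.dualMap f, hm⟩ = f
    rw [hsub, LinearEquiv.symm_apply_apply]
  clear hr
  -- M* is finite free and nonzero
  haveI hNfin : Module.Finite R (Module.Dual R M) :=
    Module.Finite.of_surjective r
      (fun f => ⟨q.dualMap f, hrj f⟩)
  haveI hNproj : Module.Projective R (Module.Dual R M) :=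
    Module.Projective.of_split q.dualMap r (LinearMap.ext hrj)
  haveI hNfp : Module.FinitePresentation R (Module.Dual R M) :=
    Module.finitePresentation_of_projective R (Module.Dual R M)
  haveI hNfree : Module.Free R (Module.Dual R M) := Module.free_of_flat_of_isLocalRing
  -- a split copy of R inside M*
  let b := Module.Free.chooseBasis R (Module.Dual R M)
  haveI : Nonempty (Module.Free.ChooseBasisIndex R (Module.Dual R M)) := b.index_nonempty
  let i₀ : Module.Free.ChooseBasisIndex R (Module.Dual R M) := Classical.arbitrary _
  let π₀ : Module.Dual R M →ₗ[R] R := b.coord i₀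
  let ι₀ : R →ₗ[R] Module.Dual R M := LinearMap.toSpanSingleton R _ (b i₀)
  have hπι : ∀ a : R, π₀ (ι₀ a) = a := by
    intro a
    simp [π₀, ι₀, LinearMap.toSpanSingleton_apply, Module.Basis.coord_apply]
  -- surjectivity of the evaluation map
  have hsurj : Function.Surjective (Module.Dual.eval R M) := by
    intro ζ
    refine ⟨q ((Module.evalEquiv R F₀).symm (ζ ∘ₗ r)), ?_⟩
    apply LinearMap.ext
    intro f
    calc (Module.Dual.eval R M) (q ((Module.evalEquiv R F₀).symm (ζ ∘ₗ r))) f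
        = (q.dualMap f) ((Module.evalEquiv R F₀).symm (ζ ∘ₗ r)) := rfl
    _ = (ζ ∘ₗ r) (q.dualMap f) := Module.apply_evalEquiv_symm_apply _ _ _ _
    _ = ζ (r (q.dualMap f)) := rfl
    _ = ζ f := by rw [hrj f]
  -- injectivity of the evaluation map
  have hinj : Function.Injective (Module.Dual.eval R M) := by
    rw [← LinearMap.ker_eq_bot]
    apply LinearMap.ker_eq_bot'.mpr
    intro m hm
    have hfm : ∀ f : Module.Dual R M, f m = 0 := fun f => LinearMap.congr_fun hm f
    obtain ⟨x, hx⟩ := hq m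
    have hχ0 : ∀ g ∈ LinearMap.ker (ModuleCat.ofHom p.dualMap :
        ModuleCat.of R (Module.Dual R F₀) ⟶ ModuleCat.of R (Module.Dual R F₁)).hom,
        (ι₀ ∘ₗ (Module.Dual.eval R F₀ x)) g = 0 := by
      intro g hg
      have hg2 : g ∈ LinearMap.ker p.dualMap := hg
      have hg' : g ∈ LinearMap.range q.dualMap := hexd ▸ hg2
      obtain ⟨f, rfl⟩ := hg'
      show ι₀ ((q.dualMap f) x) = 0
      have hfx : (q.dualMap f) x = f m := by rw [← hx]; rfl
      rw [hfx, hfm f, map_zero]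
    obtain ⟨ξ₀, hξ⟩ := fact1 (ModuleCat.ofHom (ι₀ ∘ₗ (Module.Dual.eval R F₀ x))) hχ0
    let ξ : Module.Dual R F₁ →ₗ[R] Module.Dual R M := ξ₀.hom
    have hxy : p ((Module.evalEquiv R F₁).symm (π₀ ∘ₗ ξ)) = x := by
      apply (Module.bijective_dual_eval R F₀).injective
      apply LinearMap.ext
      intro g
      have h2 : ξ (p.dualMap g) = (ι₀ ∘ₗ (Module.Dual.eval R F₀ x)) g :=
        LinearMap.congr_fun (congrArg ModuleCat.Hom.hom hξ) g
      calc (Module.Dual.eval R F₀) (p ((Module.evalEquiv R F₁).symm (π₀ ∘ₗ ξ))) g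
          = (p.dualMap g) ((Module.evalEquiv R F₁).symm (π₀ ∘ₗ ξ)) := rfl
      _ = (π₀ ∘ₗ ξ) (p.dualMap g) := Module.apply_evalEquiv_symm_apply _ _ _ _
      _ = π₀ (ξ (p.dualMap g)) := rfl
      _ = π₀ ((ι₀ ∘ₗ (Module.Dual.eval R F₀ x)) g) := by rw [h2]
      _ = π₀ (ι₀ (g x)) := rfl
      _ = g x := hπι _
      _ = (Module.Dual.eval R F₀) x g := rfl
    rw [← hx, ← hxy]
    exact hpq.apply_apply_eq_zero _
  exact Module.Free.of_equiv (LinearEquiv.ofBijective (Module.Dual.eval R M) ⟨hinj, hsurj⟩).symm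
end

section
/- Let R = C[[x,y]]/(xy), M = R/(x), N = R/(x^2). Then Tor_s^R(M, N) = 0 if s is a positive even integer, and Tor_s^R(M, N) \neq 0 if s is a positive odd integer. -/
open CategoryTheory MvPowerSeries

noncomputable section

/-- The ring `R = ℂ[[x,y]]/(xy)`. -/
abbrev R10 : Type :=
  MvPowerSeries (Fin 2) ℂ ⧸
    Ideal.span {(X 0 : MvPowerSeries (Fin 2) ℂ) * X 1}

def x10 : R10 := Ideal.Quotient.mk _ (X 0)

/-- `M = R/(x)` -/
abbrev M10 : Type := R10 ⧸ Ideal.span {x10}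
/-- `N = R/(x²)` -/
abbrev N10 : Type := R10 ⧸ Ideal.span {x10 ^ 2}

namespace Stmt10

abbrev S2 : Type := MvPowerSeries (Fin 2) ℂ

def y10 : R10 := Ideal.Quotient.mk _ (X 1)

def killFun (i : Fin 2) (F : S2) : S2 :=
  (fun m => if m i = 0 then coeff m F else 0 : (Fin 2 →₀ ℕ) → ℂ)

lemma coeff_killFun (i : Fin 2) (F : S2) (m : Fin 2 →₀ ℕ) :
    coeff m (killFun i F) = if m i = 0 then coeff m F else 0 := rfl

/-- The "kill variable i" ring hom. -/
def kill (i : Fin 2) : S2 →+* S2 where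
  toFun := killFun i
  map_one' := by
    apply MvPowerSeries.ext
    intro m
    rw [coeff_killFun, MvPowerSeries.coeff_one]
    split_ifs with h h2 h2
    · rfl
    · rfl
    · exact absurd (by rw [h2]; simp) h
    · rfl
  map_mul' F G := by
    apply MvPowerSeries.ext
    intro m
    rw [coeff_killFun, MvPowerSeries.coeff_mul, MvPowerSeries.coeff_mul]
    split_ifs with h
    · refine Finset.sum_congr rfl fun p hp => ?_
      rw [Finset.HasAntidiagonal.mem_antidiagonal] at hp
      have h0 : p.1 i + p.2 i = m i := by
        have := congrArg (fun m : Fin 2 →₀ ℕ => m i) hp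
        simpa using this
      have h1 : p.1 i = 0 := by omega
      have h2 : p.2 i = 0 := by omega
      rw [coeff_killFun, coeff_killFun, if_pos h1, if_pos h2]
    · symm
      refine Finset.sum_eq_zero fun p hp => ?_
      rw [Finset.HasAntidiagonal.mem_antidiagonal] at hp
      have h0 : p.1 i + p.2 i = m i := by
        have := congrArg (fun m : Fin 2 →₀ ℕ => m i) hp
        simpa using this
      rw [coeff_killFun, coeff_killFun]
      by_cases h1 : p.1 i = 0
      · rw [if_pos h1, if_neg (by omega), mul_zero]
      · rw [if_neg h1, zero_mul]
  map_zero' := by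
    apply MvPowerSeries.ext
    intro m
    rw [coeff_killFun]
    simp
  map_add' F G := by
    apply MvPowerSeries.ext
    intro m
    rw [map_add, coeff_killFun, coeff_killFun, coeff_killFun, map_add]
    split_ifs <;> simp

lemma coeff_kill (i : Fin 2) (F : S2) (m : Fin 2 →₀ ℕ) :
    coeff m (kill i F) = if m i = 0 then coeff m F else 0 := rfl

lemma kill_eq_zero_iff (i : Fin 2) (F : S2) :
    kill i F = 0 ↔ (X i : S2) ∣ F := by
  rw [X_dvd_iff]
  constructor
  · intro h m hm
    have := congrArg (coeff m) h
    rw [coeff_kill, if_pos hm, map_zero] at this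
    exact this
  · intro h
    apply MvPowerSeries.ext
    intro m
    rw [coeff_kill, map_zero]
    split_ifs with hm
    · exact h m hm
    · rfl

lemma kill_X_self (i : Fin 2) : kill i (X i : S2) = 0 := by
  rw [kill_eq_zero_iff]

lemma kill_X_ne (i j : Fin 2) (h : j ≠ i) : kill i (X j : S2) = X j := by
  apply MvPowerSeries.ext
  intro m
  rw [coeff_kill]
  split_ifs with hm
  · rfl
  · rw [MvPowerSeries.coeff_X, if_neg]
    rintro rfl
    exact hm (Finsupp.single_eq_of_ne h.symm)

lemma X_ne_zero' (i : Fin 2) : (X i : S2) ≠ 0 := by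
  intro h
  have := congrArg (coeff (Finsupp.single i 1)) h
  rw [MvPowerSeries.coeff_X, if_pos rfl, map_zero] at this
  exact one_ne_zero this

end Stmt10

namespace Stmt10

lemma mk_eq_zero_iff (F : S2) :
    Ideal.Quotient.mk (Ideal.span {(X 0 : S2) * X 1}) F = 0 ↔ ((X 0 : S2) * X 1) ∣ F := by
  rw [Ideal.Quotient.eq_zero_iff_mem, Ideal.mem_span_singleton]

lemma x_mul_y : x10 * y10 = 0 := by
  rw [x10, y10, ← map_mul, mk_eq_zero_iff]

lemma mk_surj : Function.Surjective (Ideal.Quotient.mk (Ideal.span {(X 0 : S2) * X 1})) :=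
  Ideal.Quotient.mk_surjective

/-- cancellation: `X i * X j ∣ F * X i → X j ∣ F`. -/
lemma dvd_of_dvd_mul_X (i j : Fin 2) (F : S2) (h : (X i : S2) * X j ∣ F * X i) :
    (X j : S2) ∣ F := by
  obtain ⟨G, hG⟩ := h
  refine ⟨G, mul_left_cancel₀ (X_ne_zero' i) ?_⟩
  calc (X i : S2) * F = F * X i := mul_comm _ _
    _ = X i * X j * G := hG
    _ = X i * (X j * G) := by ring

lemma X1_dvd_of_dvd_mul_sq (F : S2) (h : (X 0 : S2) * X 1 ∣ F * X 0 ^ 2) :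
    (X 1 : S2) ∣ F := by
  obtain ⟨G, hG⟩ := h
  have h1 : F * X 0 = X 1 * G := by
    apply mul_left_cancel₀ (X_ne_zero' 0)
    calc (X 0 : S2) * (F * X 0) = F * X 0 ^ 2 := by ring
      _ = X 0 * X 1 * G := hG
      _ = X 0 * (X 1 * G) := by ring
  rw [← kill_eq_zero_iff]
  have h2 := congrArg (kill 1) h1
  rw [map_mul, map_mul, kill_X_self, zero_mul, kill_X_ne 1 0 (by decide)] at h2
  rcases mul_eq_zero.1 h2 with h3 | h3
  · exact h3
  · exact absurd h3 (X_ne_zero' 0)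

lemma X0_dvd_of (F A B : S2) (h : F * X 1 = X 0 * A + (X 0 * X 1) * B) :
    (X 0 : S2) ∣ F := by
  rw [← kill_eq_zero_iff]
  have h2 := congrArg (kill 0) h
  rw [map_mul, map_add, map_mul, map_mul, map_mul, kill_X_self, zero_mul, zero_mul, zero_mul,
    add_zero, kill_X_ne 0 1 (by decide)] at h2
  rcases mul_eq_zero.1 h2 with h3 | h3
  · exact h3
  · exact absurd h3 (X_ne_zero' 1)

/-- `f x² = 0 → y ∣ f` in `R10`. -/
lemma ker_x2 (f : R10) (h : f * x10 ^ 2 = 0) : ∃ g, f = y10 * g := by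
  obtain ⟨F, rfl⟩ := mk_surj f
  rw [x10, ← map_pow, ← map_mul, mk_eq_zero_iff] at h
  obtain ⟨G, hG⟩ := X1_dvd_of_dvd_mul_sq F h
  exact ⟨Ideal.Quotient.mk _ G, by rw [y10, ← map_mul, ← hG]⟩

lemma ker_x (f : R10) (h : f * x10 = 0) : ∃ g, f = y10 * g := by
  obtain ⟨F, rfl⟩ := mk_surj f
  rw [x10, ← map_mul, mk_eq_zero_iff] at h
  obtain ⟨G, hG⟩ := dvd_of_dvd_mul_X 0 1 F h
  exact ⟨Ideal.Quotient.mk _ G, by rw [y10, ← map_mul, ← hG]⟩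

lemma ker_y (f : R10) (h : f * y10 = 0) : ∃ g, f = x10 * g := by
  obtain ⟨F, rfl⟩ := mk_surj f
  rw [y10, ← map_mul, mk_eq_zero_iff, mul_comm (X 0 : S2) (X 1)] at h
  obtain ⟨G, hG⟩ := dvd_of_dvd_mul_X 1 0 F h
  exact ⟨Ideal.Quotient.mk _ G, by rw [x10, ← map_mul, ← hG]⟩

/-- `f y ∈ (x) → f ∈ (x)` in `R10`. -/
lemma ker_y_M (f : R10) (h : f * y10 ∈ Ideal.span {x10}) : f ∈ Ideal.span {x10} := by
  rw [Ideal.mem_span_singleton] at h ⊢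
  obtain ⟨c, hc⟩ := h
  obtain ⟨F, rfl⟩ := mk_surj f
  obtain ⟨C, rfl⟩ := mk_surj c
  rw [y10, x10, ← map_mul, ← map_mul, ← sub_eq_zero, ← map_sub, mk_eq_zero_iff] at hc
  obtain ⟨B, hB⟩ := hc
  obtain ⟨G, hG⟩ := X0_dvd_of F C B (by rw [← hB]; ring)
  exact ⟨Ideal.Quotient.mk _ G, by rw [x10, ← map_mul, ← hG]⟩

lemma one_sub_y_mul (g : R10) : 1 - y10 * g ∉ Ideal.span {x10} := by
  rw [Ideal.mem_span_singleton]
  rintro ⟨c, hc⟩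
  obtain ⟨G, rfl⟩ := mk_surj g
  obtain ⟨C, rfl⟩ := mk_surj c
  rw [y10, x10, ← map_mul, ← map_mul, ← sub_eq_zero] at hc
  rw [show (1 : R10) = Ideal.Quotient.mk _ (1 : S2) from rfl] at hc
  rw [← map_sub, ← map_sub, mk_eq_zero_iff] at hc
  obtain ⟨B, hB⟩ := hc
  have := congrArg constantCoeff hB
  simp [map_sub, map_mul, constantCoeff_X] at this

/-- The sequence of differentials. -/
def e : ℕ → R10 := fun n => if n = 0 then x10 ^ 2 else if Even n then x10 else y10

lemma e_succ_mul (n : ℕ) : e (n + 1) * e n = 0 := by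
  rcases Nat.even_or_odd n with hn | hn
  · have h1 : e (n + 1) = y10 := by
      simp [e, Nat.even_add_one, hn]
    rcases eq_or_ne n 0 with rfl | h0
    · rw [h1, show e 0 = x10 ^ 2 from rfl, pow_two, ← mul_assoc, mul_comm y10 x10, x_mul_y,
        zero_mul]
    · rw [h1, show e n = x10 from by simp [e, h0, hn], mul_comm, x_mul_y]
  · have hne : ¬ Even n := by simp [Nat.even_iff, Nat.odd_iff.1 hn]
    have h0 : n ≠ 0 := by rintro rfl; exact hne (by simp)
    have h1 : e n = y10 := by simp [e, h0, hne]
    have h2 : e (n + 1) = x10 := by simp [e, Nat.even_add_one, hne]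
    rw [h1, h2, x_mul_y]

lemma exact_e (n : ℕ) (c : R10) (hc : e n * c = 0) : ∃ a, e (n + 1) * a = c := by
  rcases Nat.even_or_odd n with hn | hn
  · have h1 : e (n + 1) = y10 := by simp [e, Nat.even_add_one, hn]
    rcases eq_or_ne n 0 with rfl | h0
    · rw [show e 0 = x10 ^ 2 from rfl, mul_comm] at hc
      obtain ⟨g, hg⟩ := ker_x2 c hc
      exact ⟨g, by rw [h1, ← hg]⟩
    · rw [show e n = x10 from by simp [e, h0, hn], mul_comm] at hc
      obtain ⟨g, hg⟩ := ker_x c hc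
      exact ⟨g, by rw [h1, ← hg]⟩
  · have hne : ¬ Even n := by simp [Nat.even_iff, Nat.odd_iff.1 hn]
    have h0 : n ≠ 0 := by rintro rfl; exact hne (by simp)
    have h1 : e n = y10 := by simp [e, h0, hne]
    have h2 : e (n + 1) = x10 := by simp [e, Nat.even_add_one, hne]
    rw [h1, mul_comm] at hc
    obtain ⟨g, hg⟩ := ker_y c hc
    exact ⟨g, by rw [h2, ← hg]⟩

lemma e_even_mem (n : ℕ) (hn : Even n) : e n ∈ Ideal.span {x10} := by
  rcases eq_or_ne n 0 with rfl | h0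
  · rw [show e 0 = x10 ^ 2 from rfl, pow_two]
    exact Ideal.mul_mem_right _ _ (Ideal.subset_span rfl)
  · rw [show e n = x10 from by simp [e, h0, hn]]
    exact Ideal.subset_span rfl

lemma e_odd (n : ℕ) (hn : Odd n) : e n = y10 := by
  have hne : ¬ Even n := by simp [Nat.even_iff, Nat.odd_iff.1 hn]
  have h0 : n ≠ 0 := by rintro rfl; exact hne (by simp)
  simp [e, h0, hne]

end Stmt10

namespace Stmt10

open CategoryTheory Limits MonoidalCategory

abbrev Rmod := ModuleCat.{0} R10

/-- scalar multiplication as a morphism in `ModuleCat`. -/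
def muls {A : Type} [AddCommGroup A] [Module R10 A] (c : R10) :
    ModuleCat.of R10 A ⟶ ModuleCat.of R10 A :=
  ModuleCat.ofHom (c • (LinearMap.id : A →ₗ[R10] A))

lemma muls_apply {A : Type} [AddCommGroup A] [Module R10 A] (c : R10) (a : A) :
    muls c a = c • a := rfl

lemma muls_comp {A : Type} [AddCommGroup A] [Module R10 A] (c c' : R10) :
    muls (c : R10) ≫ (muls c' : ModuleCat.of R10 A ⟶ _) = muls (c' * c) := by
  apply ModuleCat.hom_ext
  apply LinearMap.ext
  intro a
  show c' • (c • a) = (c' * c) • a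
  rw [smul_smul]

lemma sq_zero (n : ℕ) {A : Type} [AddCommGroup A] [Module R10 A] :
    (muls (e (n + 1)) : ModuleCat.of R10 A ⟶ _) ≫ muls (e n) = 0 := by
  have h : e n * e (n + 1) = 0 := by rw [mul_comm]; exact e_succ_mul n
  rw [muls_comp, h]
  apply ModuleCat.hom_ext
  apply LinearMap.ext
  intro a
  show (0 : R10) • a = 0
  exact zero_smul R10 a

/-- The 2-periodic projective resolution of `N10`. -/
def Pc : ChainComplex Rmod ℕ :=
  ChainComplex.of (fun _ => ModuleCat.of R10 R10) (fun n => muls (e n)) (fun n => sq_zero n)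

/-- The explicit complex computing the Tor groups. -/
def Qc : ChainComplex Rmod ℕ :=
  ChainComplex.of (fun _ => ModuleCat.of R10 M10) (fun n => muls (e n)) (fun n => sq_zero n)

lemma Pc_d (n : ℕ) :
    Pc.d (n + 1) n = (muls (e n) : ModuleCat.of R10 R10 ⟶ ModuleCat.of R10 R10) :=
  ChainComplex.of_d (fun _ => ModuleCat.of R10 R10) (fun n => muls (e n)) n

lemma Qc_d (n : ℕ) :
    Qc.d (n + 1) n = (muls (e n) : ModuleCat.of R10 M10 ⟶ ModuleCat.of R10 M10) :=
  ChainComplex.of_d (fun _ => ModuleCat.of R10 M10) (fun n => muls (e n)) n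

/-- the augmentation map `R → N`. -/
def πN : ModuleCat.of R10 R10 ⟶ ModuleCat.of R10 N10 :=
  ModuleCat.ofHom (Ideal.span {x10 ^ 2}).mkQ

lemma πN_surjective : Function.Surjective πN := Submodule.mkQ_surjective _

lemma muls_e0_πN : (muls (e 0) : ModuleCat.of R10 R10 ⟶ _) ≫ πN = 0 := by
  apply ModuleCat.hom_ext
  apply LinearMap.ext
  intro (a : R10)
  show Submodule.Quotient.mk (e 0 • a) = (0 : N10)
  rw [Submodule.Quotient.mk_eq_zero]
  show (e 0 : R10) • a ∈ Ideal.span {x10 ^ 2}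
  rw [smul_eq_mul, show e 0 = x10 ^ 2 from rfl]
  exact Ideal.mul_mem_right _ _ (Ideal.subset_span rfl)

lemma d10_πN : Pc.d 1 0 ≫ πN = 0 := by
  rw [show (1 : ℕ) = 0 + 1 from rfl, Pc_d]
  exact muls_e0_πN

def πPc : Pc ⟶ (ChainComplex.single₀ Rmod).obj (ModuleCat.of R10 N10) :=
  (ChainComplex.toSingle₀Equiv _ _).symm ⟨πN, d10_πN⟩

lemma Pc_exactAt (n : ℕ) : Pc.ExactAt (n + 1) := by
  rw [HomologicalComplex.exactAt_iff' _ (n + 2) (n + 1) n (by simp) (by simp)]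
  rw [ShortComplex.moduleCat_exact_iff]
  rintro (c : R10) hc
  have hc' : e n * c = 0 := by
    have h2 : muls (e n) c = 0 := by
      rw [← Pc_d]; exact hc
    rw [muls_apply, smul_eq_mul] at h2
    exact h2
  obtain ⟨a, ha⟩ := exact_e n c hc'
  refine ⟨a, ?_⟩
  show Pc.d (n + 2) (n + 1) a = c
  rw [Pc_d]
  exact ha

instance : Projective (ModuleCat.of R10 R10) :=
  ModuleCat.projective_of_free (Module.Basis.singleton PUnit.{1} R10)

instance Pc_projective (n : ℕ) : Projective (Pc.X n) := by
  show Projective (ModuleCat.of R10 R10)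
  infer_instance

/-- The projective resolution of `N10`. -/
def Pres : ProjectiveResolution (ModuleCat.of R10 N10) where
  complex := Pc
  projective := Pc_projective
  π := πPc
  quasiIso := ⟨fun n => by
    cases n with
    | zero =>
      rw [ChainComplex.quasiIsoAt₀_iff, ShortComplex.quasiIso_iff_of_zeros']
      · constructor
        · rw [ShortComplex.moduleCat_exact_iff]
          rintro (c : R10) hc
          have hc' : πN c = 0 := by
            have h3 : πPc.f 0 c = 0 := hc
            rw [show πPc.f 0 = πN from
              ChainComplex.toSingle₀Equiv_symm_apply_f_zero _ _] at h3
            exact h3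
          have hmem : c ∈ Ideal.span {x10 ^ 2} := by
            rwa [show πN c = Submodule.Quotient.mk c from rfl,
              Submodule.Quotient.mk_eq_zero] at hc'
          rw [Ideal.mem_span_singleton] at hmem
          obtain ⟨a, ha⟩ := hmem
          refine ⟨a, ?_⟩
          show Pc.d 1 0 a = c
          rw [show (1 : ℕ) = 0 + 1 from rfl, Pc_d]
          exact ha.symm
        · have h4 : Epi πN := (ModuleCat.epi_iff_surjective _).2 πN_surjective
          rw [show ((HomologicalComplex.shortComplexFunctor' Rmod (ComplexShape.down ℕ) 1 0 0).map πPc).τ₂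
            = πN from ChainComplex.toSingle₀Equiv_symm_apply_f_zero _ _]
          exact h4
      · exact Pc.shape 0 0 (by simp)
      · show ((ChainComplex.single₀ Rmod).obj (ModuleCat.of R10 N10)).d 1 0 = 0
        simp; rfl
      · show ((ChainComplex.single₀ Rmod).obj (ModuleCat.of R10 N10)).d 0 0 = 0
        simp; rfl
    | succ n =>
      rw [quasiIsoAt_iff_exactAt']
      · exact Pc_exactAt n
      · apply ChainComplex.exactAt_succ_single_obj⟩

end Stmt10

namespace Stmt10

open CategoryTheory Limits MonoidalCategory

abbrev Fm : Rmod ⥤ Rmod := (tensoringLeft Rmod).obj (ModuleCat.of R10 M10)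

def ridIso : Fm.obj (ModuleCat.of R10 R10) ≅ ModuleCat.of R10 M10 :=
  (TensorProduct.rid R10 M10).toModuleIso

lemma whisker_muls (c : R10) :
    (ModuleCat.of R10 M10 ◁ (muls c : ModuleCat.of R10 R10 ⟶ ModuleCat.of R10 R10)) ≫
        ridIso.hom = ridIso.hom ≫ muls c := by
  apply ModuleCat.hom_ext
  apply TensorProduct.ext'
  intro m r
  show (TensorProduct.rid R10 M10) (m ⊗ₜ (c • r)) =
    c • ((TensorProduct.rid R10 M10) (m ⊗ₜ r))
  rw [TensorProduct.rid_tmul, TensorProduct.rid_tmul, smul_smul, smul_eq_mul]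

def Tc : ChainComplex Rmod ℕ := (Fm.mapHomologicalComplex (ComplexShape.down ℕ)).obj Pc

def TQiso : Tc ≅ Qc := by
  refine HomologicalComplex.Hom.isoOfComponents (fun i => ridIso) ?_
  rintro i j (rfl : j + 1 = i)
  rw [Qc_d]
  rw [show Tc.d (j + 1) j = Fm.map (Pc.d (j + 1) j) from rfl, Pc_d]
  exact (whisker_muls (e j)).symm

lemma smul_M_zero (c : R10) (hc : c ∈ Ideal.span {x10}) (m : M10) : c • m = 0 := by
  obtain ⟨f, rfl⟩ := Submodule.Quotient.mk_surjective _ m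
  rw [← Submodule.Quotient.mk_smul, Submodule.Quotient.mk_eq_zero]
  rw [smul_eq_mul]
  exact Ideal.mul_mem_right _ _ hc

lemma ker_y_M' (m : M10) (hm : y10 • m = 0) : m = 0 := by
  obtain ⟨f, rfl⟩ := Submodule.Quotient.mk_surjective _ m
  rw [← Submodule.Quotient.mk_smul, Submodule.Quotient.mk_eq_zero, smul_eq_mul] at hm
  rw [Submodule.Quotient.mk_eq_zero]
  exact ker_y_M f (by rw [mul_comm f y10]; exact hm)

/-- exactness of `Qc` at even positive degrees -/
lemma Qc_exactAt (t : ℕ) (ht : Odd t) : Qc.ExactAt (t + 1) := by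
  rw [HomologicalComplex.exactAt_iff' _ (t + 2) (t + 1) t (by simp) (by simp)]
  rw [ShortComplex.moduleCat_exact_iff]
  rintro (m : M10) hm
  have hm' : y10 • m = 0 := by
    have h2 : Qc.d (t + 1) t m = 0 := hm
    rw [Qc_d, e_odd t ht] at h2
    exact h2
  refine ⟨0, ?_⟩
  show Qc.d (t + 2) (t + 1) 0 = m
  rw [map_zero, ker_y_M' m hm']; rfl

/-- nontriviality of the homology of `Qc` at odd degrees -/
lemma Qc_homology_nontrivial (t : ℕ) (ht : Even t) :
    Nontrivial ((Qc.sc' (t + 2) (t + 1) t).moduleCatLeftHomologyData.H) := by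
  set S := Qc.sc' (t + 2) (t + 1) t with hS
  have h1mem : (show S.X₂ from (1 : M10)) ∈ LinearMap.ker S.g.hom := by
    refine LinearMap.mem_ker.2 ?_
    show Qc.d (t + 1) t (1 : M10) = 0
    rw [Qc_d]
    exact smul_M_zero (e t) (e_even_mem t ht) 1
  refine ⟨Submodule.Quotient.mk ⟨(show S.X₂ from (1 : M10)), h1mem⟩, 0, ?_⟩
  refine fun hq => absurd (LinearMap.mem_range.1 ((Submodule.Quotient.mk_eq_zero _).1 hq)) ?_
  rintro ⟨w, hw⟩
  have hw2 : Qc.d (t + 2) (t + 1) w = (1 : M10) := congrArg Subtype.val hw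
  rw [Qc_d, e_odd (t + 1) (Even.add_one ht)] at hw2
  have hw3 : y10 • (show M10 from w) = 1 := hw2
  obtain ⟨g, hg⟩ := Submodule.Quotient.mk_surjective _ (show M10 from w)
  rw [← hg, ← Submodule.Quotient.mk_smul, smul_eq_mul,
    show (1 : M10) = Submodule.Quotient.mk 1 from rfl, Submodule.Quotient.eq] at hw3
  exact one_sub_y_mul g (by simpa using (Ideal.span {x10}).neg_mem hw3)

lemma subsingleton_of_isZero {X : Rmod} (h : IsZero X) : Subsingleton X := by
  constructor
  intro a b
  have h1 : (𝟙 X : X ⟶ X) = 0 := h.eq_of_src _ _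
  have h2 : ∀ z : X, z = 0 := by
    intro z
    calc z = (𝟙 X : X ⟶ X) z := rfl
      _ = (0 : X ⟶ X) z := by rw [h1]
      _ = 0 := rfl
  rw [h2 a, h2 b]

lemma nontrivial_of_iso {X Y : Rmod} (iso : X ≅ Y) (h : Nontrivial Y) : Nontrivial X := by
  obtain ⟨a, b, hab⟩ := h
  have hinj : ∀ z : Y, iso.hom (iso.inv z) = z := by
    intro z
    calc iso.hom (iso.inv z) = (iso.inv ≫ iso.hom) z := rfl
      _ = (𝟙 Y : Y ⟶ Y) z := by rw [iso.inv_hom_id]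
      _ = z := rfl
  exact ⟨iso.inv a, iso.inv b, fun h2 => hab (by rw [← hinj a, ← hinj b, h2])⟩

/-- The Tor group as the homology of `Qc`. -/
def torIso (s : ℕ) :
    (((Tor Rmod s).obj (ModuleCat.of R10 M10)).obj (ModuleCat.of R10 N10) :
      Rmod) ≅ Qc.homology s :=
  (Pres.isoLeftDerivedObj Fm s) ≪≫
    (HomologicalComplex.homologyFunctor Rmod (ComplexShape.down ℕ) s).mapIso TQiso

end Stmt10


/-- For `R = ℂ[[x,y]]/(xy)`, `M = R/(x)` and `N = R/(x²)`:
`Tor_s^R(M,N) = 0` for positive even `s`, and `Tor_s^R(M,N) ≠ 0` for positive odd `s`. -/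
theorem stmt_10 :
    (∀ s : ℕ, 0 < s → Even s →
      Subsingleton (((Tor (ModuleCat.{0} R10) s).obj (ModuleCat.of R10 M10)).obj
        (ModuleCat.of R10 N10))) ∧
    (∀ s : ℕ, 0 < s → Odd s →
      Nontrivial (((Tor (ModuleCat.{0} R10) s).obj (ModuleCat.of R10 M10)).obj
        (ModuleCat.of R10 N10))) := by
  constructor
  · intro s hs hsev
    obtain ⟨t, rfl⟩ : ∃ t, s = t + 1 := ⟨s - 1, by omega⟩
    have ht : Odd t := by
      rcases hsev with ⟨k, hk⟩
      exact ⟨k - 1, by omega⟩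
    have hz : Limits.IsZero (Stmt10.Qc.homology (t + 1)) :=
      (HomologicalComplex.exactAt_iff_isZero_homology _ _).1 (Stmt10.Qc_exactAt t ht)
    exact Stmt10.subsingleton_of_isZero (hz.of_iso (Stmt10.torIso (t + 1)))
  · intro s hs hsodd
    obtain ⟨t, rfl⟩ : ∃ t, s = t + 1 := ⟨s - 1, by omega⟩
    have ht : Even t := by
      rcases hsodd with ⟨k, hk⟩
      exact ⟨k, by omega⟩
    exact Stmt10.nontrivial_of_iso
      (Stmt10.torIso (t + 1) ≪≫
        Stmt10.Qc.homologyIsoSc' (t + 2) (t + 1) t (by simp) (by simp) ≪≫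
        (Stmt10.Qc.sc' (t + 2) (t + 1) t).moduleCatHomologyIso)
      (Stmt10.Qc_homology_nontrivial t ht)
end
end

section
/- Let R be a commutative Noetherian local ring and I an ideal of R containing a non zero-divisor, such that I is not principal. Then I \otimes_R I has a nonzero torsion element; in particular I \otimes_R I is not torsion-free. -/
open scoped TensorProduct

set_option maxHeartbeats 1000000 in
set_option synthInstance.maxHeartbeats 400000 in
/-- If `I` is a non-principal ideal of a commutative Noetherian local
ring containing a non zero-divisor, then `I ⊗_R I` has a nonzero torsion element;
in particular it is not torsion-free. -/
theorem stmt_15 (R : Type) [CommRing R] [IsNoetherianRing R] [IsLocalRing R]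
    (I : Ideal R) (a : R) (ha : a ∈ I) (ha' : a ∈ nonZeroDivisors R)
    (hI : ¬ I.IsPrincipal) :
    (∃ z : (↥I) ⊗[R] (↥I), z ∈ Submodule.torsion R ((↥I) ⊗[R] (↥I)) ∧ z ≠ 0) ∧
      Submodule.torsion R ((↥I) ⊗[R] (↥I)) ≠ ⊥ := by
  classical
  set m := IsLocalRing.maximalIdeal R with hm
  haveI : m.IsMaximal := IsLocalRing.maximalIdeal.isMaximal R
  set M := ↥I
  set V := M ⧸ (m • ⊤ : Submodule R M) with hV
  let q : M →ₗ[R] V := Submodule.mkQ (m • ⊤)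
  haveI : IsScalarTower R (R ⧸ m) V :=
    Module.IsTorsionBySet.isScalarTower (Module.isTorsionBySet_quotient_ideal_smul M m)
  -- fg of top
  have htopfg : (⊤ : Submodule R M).FG := by
    rw [Submodule.fg_top]
    exact IsNoetherian.noetherian I
  -- Nakayama-based key lemma
  have key : ∀ x : M, (∀ y : M, q y ∈ Submodule.span (R ⧸ m) {q x}) → I.IsPrincipal := by
    intro x hx
    have hle : (⊤ : Submodule R M) ≤ (Submodule.span R {x}) ⊔ (m • ⊤ : Submodule R M) := by
      intro y _
      obtain ⟨c, hc⟩ := Submodule.mem_span_singleton.mp (hx y)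
      obtain ⟨r, rfl⟩ := Ideal.Quotient.mk_surjective c
      have hc' : q (y - r • x) = 0 := by
        have : (Ideal.Quotient.mk m r) • q x = q (r • x) := rfl
        rw [map_sub, ← this, hc, sub_self]
      have hmem : y - r • x ∈ (m • ⊤ : Submodule R M) :=
        (Submodule.Quotient.mk_eq_zero _).mp hc'
      have : y = r • x + (y - r • x) := by abel
      rw [this]
      exact Submodule.add_mem _
        (Submodule.mem_sup_left (Submodule.smul_mem _ _ (Submodule.mem_span_singleton_self x)))
        (Submodule.mem_sup_right hmem)
    have hNak : (⊤ : Submodule R M) ≤ Submodule.span R {x} :=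
      Submodule.le_of_le_smul_of_le_jacobson_bot htopfg
        (by rw [IsLocalRing.jacobson_eq_maximalIdeal ⊥ bot_ne_top]) hle
    refine ⟨⟨x.1, le_antisymm ?_ ?_⟩⟩
    · intro z hz
      obtain ⟨r, hr⟩ := Submodule.mem_span_singleton.mp (hNak (Submodule.mem_top (x := ⟨z, hz⟩)))
      exact Ideal.mem_span_singleton'.mpr ⟨r, congrArg Subtype.val hr⟩
    · exact Submodule.span_le.mpr (Set.singleton_subset_iff.mpr x.2)
  -- existence of a pair with "mutually independent" images
  have hpair : ∃ x y : M, q x ∉ Submodule.span (R ⧸ m) {q y} ∧ q y ∉ Submodule.span (R ⧸ m) {q x} := by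
    letI : Field (R ⧸ m) := Ideal.Quotient.field m
    by_contra hcon
    push_neg at hcon
    apply hI
    by_cases h0 : ∀ x : M, q x = 0
    · refine key ⟨a, ha⟩ fun y => ?_
      rw [h0 y]; exact Submodule.zero_mem _
    · push_neg at h0
      obtain ⟨x, hx⟩ := h0
      refine key x fun y => ?_
      rcases Classical.em (q y ∈ Submodule.span (R ⧸ m) {q x}) with h | h
      · exact h
      · have hxy := hcon x y
        have hqx : q x ∈ Submodule.span (R ⧸ m) {q y} := by tauto
        obtain ⟨c, hc⟩ := Submodule.mem_span_singleton.mp hqx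
        have hc0 : c ≠ 0 := by rintro rfl; simp at hc; exact hx hc.symm
        refine Submodule.mem_span_singleton.mpr ⟨c⁻¹, ?_⟩
        rw [← hc, smul_smul, inv_mul_cancel₀ hc0, one_smul]
  obtain ⟨x, y, hxy, hyx⟩ := hpair
  -- dual functionals
  have hφex : ∃ f : Module.Dual (R ⧸ m) V, f (q x) ≠ 0 ∧
      (Submodule.span (R ⧸ m) {q y}).map f = ⊥ := by
    letI : Field (R ⧸ m) := Ideal.Quotient.field m
    exact Submodule.exists_dual_map_eq_bot_of_notMem hxy inferInstance
  have hψex : ∃ f : Module.Dual (R ⧸ m) V, f (q y) ≠ 0 ∧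
      (Submodule.span (R ⧸ m) {q x}).map f = ⊥ := by
    letI : Field (R ⧸ m) := Ideal.Quotient.field m
    exact Submodule.exists_dual_map_eq_bot_of_notMem hyx inferInstance
  obtain ⟨φ, hφx, hφmap⟩ := hφex
  obtain ⟨ψ, hψy, hψmap⟩ := hψex
  have hφy : φ (q y) = 0 := by
    have : φ (q y) ∈ (Submodule.span (R ⧸ m) {q y}).map φ :=
      Submodule.mem_map_of_mem (Submodule.mem_span_singleton_self _)
    rw [hφmap] at this; exact this
  have hψx : ψ (q x) = 0 := by
    have : ψ (q x) ∈ (Submodule.span (R ⧸ m) {q x}).map ψ :=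
      Submodule.mem_map_of_mem (Submodule.mem_span_singleton_self _)
    rw [hψmap] at this; exact this
  -- the separating linear map on the tensor product
  let φR : M →ₗ[R] (R ⧸ m) := (φ.restrictScalars R).comp q
  let ψR : M →ₗ[R] (R ⧸ m) := (ψ.restrictScalars R).comp q
  let B : M →ₗ[R] M →ₗ[R] (R ⧸ m) := LinearMap.mk₂ R (fun u v => φR u * ψR v)
    (fun u u' v => by simp [add_mul])
    (fun r u v => by simp [smul_mul_assoc])
    (fun u v v' => by simp [mul_add])
    (fun r u v => by simp [mul_smul_comm])
  let T : (M ⊗[R] M) →ₗ[R] (R ⧸ m) := TensorProduct.lift B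
  set z : M ⊗[R] M := x ⊗ₜ[R] y - y ⊗ₜ[R] x with hz
  have hTz : T z ≠ 0 := by
    have : T z = φR x * ψR y - φR y * ψR x := by
      simp [hz, T, B, TensorProduct.lift.tmul]
    rw [this]
    simp only [φR, ψR, LinearMap.comp_apply, LinearMap.restrictScalars_apply, hφy, hψx,
      zero_mul, mul_zero, sub_zero]
    letI : Field (R ⧸ m) := Ideal.Quotient.field m
    exact mul_ne_zero hφx hψy
  have hzne : z ≠ 0 := fun h => hTz (by rw [h, map_zero])
  have htor : a • z = 0 := by
    have h1 : a • (x ⊗ₜ[R] y) = (⟨a, ha⟩ : M) ⊗ₜ[R] (x.1 • y) := by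
      rw [TensorProduct.smul_tmul']
      have : a • x = x.1 • (⟨a, ha⟩ : M) := Subtype.ext (mul_comm a x.1)
      rw [this, TensorProduct.smul_tmul]
    have h2 : a • (y ⊗ₜ[R] x) = (⟨a, ha⟩ : M) ⊗ₜ[R] (y.1 • x) := by
      rw [TensorProduct.smul_tmul']
      have : a • y = y.1 • (⟨a, ha⟩ : M) := Subtype.ext (mul_comm a y.1)
      rw [this, TensorProduct.smul_tmul]
    have h3 : x.1 • y = y.1 • x := Subtype.ext (mul_comm x.1 y.1)
    rw [hz, smul_sub, h1, h2, h3, sub_self]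
  have hzt : z ∈ Submodule.torsion R (M ⊗[R] M) := ⟨⟨a, ha'⟩, htor⟩
  refine ⟨⟨z, hzt, hzne⟩, fun hbot => ?_⟩
  rw [hbot] at hzt
  exact hzne hzt
end

section
/- Let R be a commutative Noetherian local ring, M a finitely generated torsion-free R-module with Ext^1_R(M,R) \neq 0 minimally generated by t elements. Let \alpha: 0 \to R^t \to N \to M \to 0 be an extension whose class in Ext^1_R(M, R^t) \cong Ext^1_R(M,R)^t corresponds to a minimal generating set (\alpha_1,...,\alpha_t) of Ext^1_R(M,R). Then Ext^1_R(N, R) = 0. -/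
open CategoryTheory CategoryTheory.Abelian

noncomputable section

noncomputable instance (R : Type) [CommRing R] :
    HasDerivedCategory (ModuleCat.{0} R) :=
  HasDerivedCategory.standard _

instance (R : Type) [CommRing R] : HasExt.{1} (ModuleCat.{0} R) :=
  hasExt_of_hasDerivedCategory _

variable (R : Type) [CommRing R]

/-- The `R`-scalar action on `Ext`-groups into `R`, given by composing with the
multiplication-by-`r` endomorphism of `R`. -/
def extSmul {X : ModuleCat.{0} R} (r : R) (e : Ext X (ModuleCat.of R R) 1) :
    Ext X (ModuleCat.of R R) 1 :=
  e.comp (Ext.mk₀ (ModuleCat.ofHom (LinearMap.lsmul R R r))) (add_zero 1)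

/-- A family `α : Fin t → Ext¹(X, R)` generates `Ext¹(X, R)` as an `R`-module. -/
def ExtGenerates {X : ModuleCat.{0} R} {t : ℕ}
    (α : Fin t → Ext X (ModuleCat.of R R) 1) : Prop :=
  ∀ e : Ext X (ModuleCat.of R R) 1,
    ∃ c : Fin t → R, e = ∑ i, extSmul R (c i) (α i)


open CategoryTheory.Limits in
lemma null_from_single {R : Type} [CommRing R] (P : ModuleCat.{0} R) [Module.Projective R P]
    (W : CochainComplex (ModuleCat.{0} R) ℤ) (hW : W.ExactAt 0)
    (g : (CochainComplex.singleFunctor (ModuleCat.{0} R) 0).obj P ⟶ W) :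
    (HomotopyCategory.quotient (ModuleCat.{0} R) (ComplexShape.up ℤ)).map g = 0 := by
  set SP := (HomologicalComplex.single (ModuleCat.{0} R) (ComplexShape.up ℤ) 0).obj P with hSP
  -- exactness of W at 0, concretely
  have hex : (W.sc' (-1) 0 1).Exact :=
    (HomologicalComplex.exactAt_iff' W (-1) 0 1 (by simp) (by simp)).1 hW
  rw [ShortComplex.moduleCat_exact_iff] at hex
  -- the degree-0 component of g, as a map P ⟶ W.X 0
  set u : P ⟶ W.X 0 :=
    (HomologicalComplex.singleObjXSelf (ComplexShape.up ℤ) 0 P).inv ≫ g.f 0 with hu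
  have hd : ((CochainComplex.singleFunctor (ModuleCat.{0} R) 0).obj P).d 0 1 = 0 :=
    HomologicalComplex.single_obj_d _ _ _ _ _
  have hu1 : u ≫ W.d 0 1 = 0 := by
    have hc := g.comm 0 1
    rw [hd, zero_comp] at hc
    rw [hu]
    exact (Category.assoc _ _ _).trans ((congrArg (fun x => _ ≫ x) hc).trans comp_zero)
  -- u lands in the range of the previous differential
  have hmem : ∀ p : P, u p ∈ LinearMap.range (W.d (-1) 0).hom := by
    intro p
    obtain ⟨x₁, hx₁⟩ := hex (u p) (by
      have := LinearMap.congr_fun (congrArg ModuleCat.Hom.hom hu1) p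
      exact this)
    exact ⟨x₁, hx₁⟩
  obtain ⟨h, hh⟩ := Module.projective_lifting_property
      (LinearMap.rangeRestrict (W.d (-1) 0).hom)
      (LinearMap.codRestrict _ u.hom hmem)
      (LinearMap.surjective_rangeRestrict _)
  have hcomp : (ModuleCat.ofHom h : P ⟶ W.X (-1)) ≫ W.d (-1) 0 = u := by
    ext p
    exact congrArg Subtype.val (LinearMap.congr_fun hh p)
  let H : Homotopy g 0 :=
    { hom := fun i j =>
        if hij : i = 0 ∧ j = -1 then
          eqToHom (show ((CochainComplex.singleFunctor (ModuleCat.{0} R) 0).obj P).X i =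
              ((CochainComplex.singleFunctor (ModuleCat.{0} R) 0).obj P).X 0 by rw [hij.1]) ≫
            (HomologicalComplex.singleObjXSelf (ComplexShape.up ℤ) 0 P).hom ≫
            (ModuleCat.ofHom h : P ⟶ W.X (-1)) ≫ eqToHom (show W.X (-1) = W.X j by rw [hij.2])
        else 0
      zero := by
        intro i j hn
        rw [dif_neg]
        rintro ⟨rfl, rfl⟩
        exact hn (by simp [ComplexShape.up])
      comm := by
        intro i
        by_cases hi : i = 0
        · subst hi
          have h1 : dNext 0 (fun i j =>
              if hij : i = 0 ∧ j = -1 then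
                eqToHom (show ((CochainComplex.singleFunctor (ModuleCat.{0} R) 0).obj P).X i =
                    ((CochainComplex.singleFunctor (ModuleCat.{0} R) 0).obj P).X 0 by rw [hij.1]) ≫
                  (HomologicalComplex.singleObjXSelf (ComplexShape.up ℤ) 0 P).hom ≫
                  (ModuleCat.ofHom h : P ⟶ W.X (-1)) ≫ eqToHom (show W.X (-1) = W.X j by rw [hij.2])
              else 0) = 0 := by
            rw [dNext_eq _ (show (ComplexShape.up ℤ).Rel 0 1 by simp), hd, zero_comp]
          have h2 : prevD 0 (fun i j =>
              if hij : i = 0 ∧ j = -1 then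
                eqToHom (show ((CochainComplex.singleFunctor (ModuleCat.{0} R) 0).obj P).X i =
                    ((CochainComplex.singleFunctor (ModuleCat.{0} R) 0).obj P).X 0 by rw [hij.1]) ≫
                  (HomologicalComplex.singleObjXSelf (ComplexShape.up ℤ) 0 P).hom ≫
                  (ModuleCat.ofHom h : P ⟶ W.X (-1)) ≫ eqToHom (show W.X (-1) = W.X j by rw [hij.2])
              else 0) = g.f 0 := by
            rw [prevD_eq _ (show (ComplexShape.up ℤ).Rel (-1) 0 by simp)]
            rw [dif_pos ⟨rfl, rfl⟩]
            simp only [eqToHom_refl, Category.id_comp, Category.comp_id, Category.assoc]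
            exact (Category.assoc _ _ _).trans ((congrArg (fun x => _ ≫ x) hcomp).trans
              ((Category.assoc _ _ _).symm.trans ((congrArg (fun x => x ≫ g.f 0)
                (Iso.hom_inv_id _)).trans (Category.id_comp _))))
          rw [h1, h2]
          simp
        · apply (HomologicalComplex.isZero_single_obj_X
            (ComplexShape.up ℤ) 0 P i hi).eq_of_src }
  rw [HomotopyCategory.eq_of_homotopy g 0 H]
  exact (HomotopyCategory.quotient (ModuleCat.{0} R) (ComplexShape.up ℤ)).map_zero _ _

open CategoryTheory.Limits in
lemma ext_one_eq_zero {R : Type} [CommRing R] (P Y : ModuleCat.{0} R) [Module.Projective R P]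
    (e : Ext P Y 1) : e = 0 := by
  apply Ext.ext
  rw [Ext.zero_hom]
  letI Qh := DerivedCategory.Qh (C := ModuleCat.{0} R)
  let A : HomotopyCategory (ModuleCat.{0} R) (ComplexShape.up ℤ) :=
    (HomotopyCategory.singleFunctor (ModuleCat.{0} R) 0).obj P
  let B : HomotopyCategory (ModuleCat.{0} R) (ComplexShape.up ℤ) :=
    (HomotopyCategory.singleFunctor (ModuleCat.{0} R) 0).obj Y
  let φ : Qh.obj A ⟶ Qh.obj (B⟦((1:ℕ):ℤ)⟧) :=
    e.hom ≫ ((Qh.commShiftIso ((1:ℕ):ℤ)).app B).inv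
  have he : e.hom = φ ≫ ((Qh.commShiftIso ((1:ℕ):ℤ)).app B).hom := by
    exact ((Category.assoc _ _ _).trans ((congrArg (fun x => e.hom ≫ x)
      (Iso.inv_hom_id _)).trans (Category.comp_id _))).symm
  rw [he]
  haveI : (HomotopyCategory.quasiIso (ModuleCat.{0} R)
      (ComplexShape.up ℤ)).HasLeftCalculusOfFractions := by
    rw [HomotopyCategory.quasiIso_eq_subcategoryAcyclic_W]; infer_instance
  obtain ⟨fr, hfr⟩ := Localization.exists_leftFraction Qh
    (HomotopyCategory.quasiIso (ModuleCat.{0} R) (ComplexShape.up ℤ)) φ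
  obtain ⟨Z, fnum, s, hs, rfl⟩ := fr.cases
  -- homology of Z at 0 is zero
  have hBshift : IsZero ((HomotopyCategory.homologyFunctor (ModuleCat.{0} R)
      (ComplexShape.up ℤ) 0).obj (B⟦((1:ℕ):ℤ)⟧)) := by
    refine IsZero.of_iso ?_
      (((HomotopyCategory.homologyFunctor (ModuleCat.{0} R)
        (ComplexShape.up ℤ) 0).shiftIso ((1:ℕ):ℤ) 0 1 (by norm_num)).app B)
    refine IsZero.of_iso ?_
      ((HomotopyCategory.homologyFunctorFactors (ModuleCat.{0} R)
        (ComplexShape.up ℤ) 1).app ((CochainComplex.singleFunctor (ModuleCat.{0} R) 0).obj Y))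
    exact (HomologicalComplex.exactAt_iff_isZero_homology _ _).1
      (HomologicalComplex.exactAt_single_obj _ _ _ _ (by norm_num))
  have hZ : IsZero ((HomotopyCategory.homologyFunctor (ModuleCat.{0} R)
      (ComplexShape.up ℤ) 0).obj Z) := by
    haveI := hs 0
    exact IsZero.of_iso hBshift
      (asIso ((HomotopyCategory.homologyFunctor (ModuleCat.{0} R)
        (ComplexShape.up ℤ) 0).map s)).symm
  have hZex : (Z.as).ExactAt 0 := by
    rw [HomologicalComplex.exactAt_iff_isZero_homology]
    exact IsZero.of_iso hZ
      ((HomotopyCategory.homologyFunctorFactors (ModuleCat.{0} R)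
        (ComplexShape.up ℤ) 0).app Z.as).symm
  obtain ⟨g, hg⟩ := (HomotopyCategory.quotient (ModuleCat.{0} R)
      (ComplexShape.up ℤ)).map_surjective fnum
  have hf0 : fnum = 0 := by
    rw [← hg]
    exact null_from_single P Z.as hZex g
  rw [hfr]
  subst hf0
  rw [MorphismProperty.LeftFraction.map]
  simp
  rfl

lemma ext_one_eq_zero_of_iso {R : Type} [CommRing R] {X Y Q : ModuleCat.{0} R} [Module.Projective R Q] (i : X ≅ Q)
    (x : Ext X Y 1) : x = 0 := by
  have h0 : (Ext.mk₀ i.inv).comp x (zero_add 1) = 0 := ext_one_eq_zero Q Y _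
  have hx : x = (Ext.mk₀ i.hom).comp ((Ext.mk₀ i.inv).comp x (zero_add 1)) (zero_add 1) := by
    rw [Ext.mk₀_comp_mk₀_assoc, Iso.hom_inv_id, Ext.mk₀_id_comp]
  rw [hx, h0, Ext.comp_zero]

lemma main_aux {R : Type} [CommRing R] {t : ℕ}
    (M : Type) [AddCommGroup M] [Module R M]
    (S : ShortComplex (ModuleCat.{0} R))
    (hS : S.ShortExact)
    (e₁ : S.X₁ ≅ ModuleCat.of R (Fin t → R))
    (e₃ : S.X₃ ≅ ModuleCat.of R M)
    (α : Fin t → Ext (ModuleCat.of R M) (ModuleCat.of R R) 1)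
    (hα : ∀ i : Fin t, α i =
      (Ext.mk₀ e₃.inv).comp
        (hS.extClass.comp
          (Ext.mk₀ (e₁.hom ≫ ModuleCat.ofHom (LinearMap.proj i))) (add_zero 1))
        (zero_add 1))
    (hgen : ∀ e : Ext (ModuleCat.of R M) (ModuleCat.of R R) 1,
      ∃ c : Fin t → R, e = ∑ i, (α i).comp
        (Ext.mk₀ (ModuleCat.ofHom (LinearMap.lsmul R R (c i)))) (add_zero 1))
    (eN : Ext S.X₂ (ModuleCat.of R R) 1) : eN = 0 := by
  haveI : Module.Projective R ↑(ModuleCat.of R (Fin t → R)) :=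
    inferInstanceAs (Module.Projective R (Fin t → R))
  have h1 : (Ext.mk₀ S.f).comp eN (zero_add 1) = 0 := ext_one_eq_zero_of_iso e₁ _
  obtain ⟨y, hy⟩ := Ext.contravariant_sequence_exact₂ hS (ModuleCat.of R R) eN h1
  obtain ⟨c, hc⟩ := hgen ((Ext.mk₀ e₃.inv).comp y (zero_add 1))
  have hy2 : y = ∑ i, hS.extClass.comp
      (Ext.mk₀ ((e₁.hom ≫ ModuleCat.ofHom (LinearMap.proj i)) ≫
        ModuleCat.ofHom (LinearMap.lsmul R R (c i)))) (add_zero 1) := by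
    have hy0 : y = (Ext.mk₀ e₃.hom).comp
        ((Ext.mk₀ e₃.inv).comp y (zero_add 1)) (zero_add 1) := by
      rw [Ext.mk₀_comp_mk₀_assoc, Iso.hom_inv_id, Ext.mk₀_id_comp]
    rw [hy0, hc]
    refine Eq.trans (map_sum ((Ext.mk₀ e₃.hom).precomp (ModuleCat.of R R) (zero_add 1))
      _ Finset.univ) ?_
    refine Finset.sum_congr rfl (fun i _ => ?_)
    rw [Ext.bilinearComp_apply_apply, hα i]
    rw [Ext.comp_assoc_of_third_deg_zero]
    rw [Ext.mk₀_comp_mk₀_assoc, Iso.hom_inv_id, Ext.mk₀_id_comp]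
    rw [Ext.comp_assoc_of_third_deg_zero, Ext.mk₀_comp_mk₀]
  have heN : eN = 0 := by
    rw [← hy, hy2]
    refine Eq.trans (map_sum ((Ext.mk₀ S.g).precomp (ModuleCat.of R R) (zero_add 1))
      _ Finset.univ) ?_
    refine Finset.sum_eq_zero (fun i _ => ?_)
    rw [Ext.bilinearComp_apply_apply]
    exact hS.comp_extClass_assoc _ _
  exact heN

/-- Let `R` be a commutative Noetherian local ring, `M` a finitely
generated torsion-free module with `Ext¹_R(M,R) ≠ 0` minimally generated by `t`
elements.  If `α : 0 → Rᵗ → N → M → 0` is an extension whose class in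
`Ext¹(M, Rᵗ) ≅ Ext¹(M,R)ᵗ` corresponds to a minimal generating set `(α₁, …, αₜ)` of
`Ext¹_R(M,R)`, then `Ext¹_R(N,R) = 0`. -/
theorem stmt_17 (R : Type) [CommRing R] [IsNoetherianRing R] [IsLocalRing R]
    (M : Type) [AddCommGroup M] [Module R M] [Module.Finite R M]
    (hMtf : Submodule.torsion R M = ⊥)
    (hExtNonzero : Nontrivial (Ext (ModuleCat.of R M) (ModuleCat.of R R) 1))
    (t : ℕ)
    (N : Type) [AddCommGroup N] [Module R N] [Module.Finite R N]
    (f : (Fin t → R) →ₗ[R] N) (g : N →ₗ[R] M)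
    (hf : Function.Injective f) (hg : Function.Surjective g)
    (hfg : Function.Exact f g)
    -- the short complex `Rᵗ → N → M` and its extension class
    (S : ShortComplex (ModuleCat.{0} R))
    (hS : S.ShortExact)
    (e₁ : S.X₁ ≅ ModuleCat.of R (Fin t → R)) (e₂ : S.X₂ ≅ ModuleCat.of R N)
    (e₃ : S.X₃ ≅ ModuleCat.of R M)
    (hcomm₁ : S.f = e₁.hom ≫ ModuleCat.ofHom f ≫ e₂.inv)
    (hcomm₂ : S.g = e₂.hom ≫ ModuleCat.ofHom g ≫ e₃.inv)
    -- the components `α i` of the class of this extension in `Ext¹(M,R)ᵗ`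
    (α : Fin t → Ext (ModuleCat.of R M) (ModuleCat.of R R) 1)
    (hα : ∀ i : Fin t, α i =
      (Ext.mk₀ e₃.inv).comp
        (hS.extClass.comp
          (Ext.mk₀ (e₁.hom ≫ ModuleCat.ofHom (LinearMap.proj i))) (add_zero 1))
        (zero_add 1))
    -- `(α i)` is a generating set of `Ext¹(M,R)`, minimal among all generating sets
    (hgen : ExtGenerates R α)
    (hmin : ∀ (s : ℕ) (β : Fin s → Ext (ModuleCat.of R M) (ModuleCat.of R R) 1),
      ExtGenerates R β → t ≤ s) :
    Subsingleton (Ext (ModuleCat.of R N) (ModuleCat.of R R) 1) := by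
  constructor
  intro a b
  have key : ∀ e : Ext (ModuleCat.of R N) (ModuleCat.of R R) 1, e = 0 := by
    intro e
    have h := main_aux M S hS e₁ e₃ α hα
      (fun x => (hgen x).imp (fun c hc => by simpa only [extSmul] using hc))
      ((Ext.mk₀ e₂.hom).comp e (zero_add 1))
    have he : e = (Ext.mk₀ e₂.inv).comp
        ((Ext.mk₀ e₂.hom).comp e (zero_add 1)) (zero_add 1) := by
      rw [Ext.mk₀_comp_mk₀_assoc, Iso.inv_hom_id, Ext.mk₀_id_comp]
    rw [he, h, Ext.comp_zero]
  rw [key a, key b]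
end
end
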